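/- If Γ' is a cubic graph with chromatic index 3 (a snarkless cubic graph), then its triangle-replaced graph ∇(Γ') admits a proper 3-edge-coloring in which every triangle receives all three colors. -/

import Mathlib

open SimpleGraph

def IsProperEdgeColoring {V α : Type*} (G : SimpleGraph V) (c : Sym2 V → α) : Prop :=
  ∀ ⦃e₁ e₂ : Sym2 V⦄, e₁ ∈ G.edgeSet → e₂ ∈ G.edgeSet → e₁ ≠ e₂ →
    (∃ v, v ∈ e₁ ∧ v ∈ e₂) → c e₁ ≠ c e₂

def nabla {V : Type*} (G : SimpleGraph V) (ρ : V → V → Fin 3) : SimpleGraph (V × Fin 3) :=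
  SimpleGraph.fromRel (fun x y =>
    x.1 = y.1 ∨ (G.Adj x.1 y.1 ∧ ρ x.1 y.1 = x.2 ∧ ρ y.1 x.1 = y.2))

lemma nabla_adj_struct {V : Type*} (G : SimpleGraph V) (c : Sym2 V → Fin 3)
    {x y : V × Fin 3} (h : (nabla G (fun u v => c s(u, v))).Adj x y) :
    x ≠ y ∧ (x.1 = y.1 ∨
      (G.Adj x.1 y.1 ∧ x.2 = c s(x.1, y.1) ∧ y.2 = c s(x.1, y.1))) := by
  rw [nabla, SimpleGraph.fromRel_adj] at h
  refine ⟨h.1, ?_⟩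
  rcases h.2 with (h1 | ⟨ha, h2, h3⟩) | (h1 | ⟨ha, h2, h3⟩)
  · exact Or.inl h1
  · exact Or.inr ⟨ha, h2.symm, by rw [Sym2.eq_swap]; exact h3.symm⟩
  · exact Or.inl h1.symm
  · exact Or.inr ⟨ha.symm, h3.symm, by rw [Sym2.eq_swap]; exact h2.symm⟩

lemma nabla_cross {V : Type*} (G : SimpleGraph V) (c : Sym2 V → Fin 3)
    {x y : V × Fin 3} (h : (nabla G (fun u v => c s(u, v))).Adj x y) (hne : x.1 ≠ y.1) :
    G.Adj x.1 y.1 ∧ x.2 = c s(x.1, y.1) ∧ y.2 = c s(x.1, y.1) := by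
  rcases (nabla_adj_struct G c h).2 with h1 | h2
  · exact absurd h1 hne
  · exact h2

lemma nabla_same {V : Type*} (G : SimpleGraph V) (c : Sym2 V → Fin 3)
    {x y : V × Fin 3} (h : (nabla G (fun u v => c s(u, v))).Adj x y) (heq : x.1 = y.1) :
    x.2 ≠ y.2 := by
  intro h2
  exact (nabla_adj_struct G c h).1 (Prod.ext heq h2)

/-- In a triangle of the nabla graph (with c proper), bases coincide. -/
lemma nabla_tri_base {V : Type*} (G : SimpleGraph V) (c : Sym2 V → Fin 3)
    (hc : IsProperEdgeColoring G c) {x y z : V × Fin 3}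
    (hxy : (nabla G (fun u v => c s(u, v))).Adj x y)
    (hyz : (nabla G (fun u v => c s(u, v))).Adj y z)
    (hxz : (nabla G (fun u v => c s(u, v))).Adj x z) :
    x.1 = y.1 := by
  by_contra hne
  obtain ⟨haxy, hx2, hy2⟩ := nabla_cross G c hxy hne
  by_cases hzx : z.1 = x.1
  · by_cases hzy : z.1 = y.1
    · exact hne (hzx ▸ hzy)
    · -- yz cross, xz same base
      obtain ⟨-, hy2', hz2⟩ := nabla_cross G c hyz (fun h => hzy h.symm)
      have : x.2 = z.2 := by
        rw [hx2, hz2, hzx, Sym2.eq_swap]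
      exact nabla_same G c hxz hzx.symm this
  · by_cases hzy : z.1 = y.1
    · -- xz cross, yz same base
      obtain ⟨-, hx2', hz2⟩ := nabla_cross G c hxz (fun h => hzx h.symm)
      have : y.2 = z.2 := by rw [hy2, hz2, hzy]
      exact nabla_same G c hyz hzy.symm this
    · -- all cross : contradiction with properness of c
      obtain ⟨hayz, hy2', hz2⟩ := nabla_cross G c hyz (fun h => hzy h.symm)
      have hedne : s(x.1, y.1) ≠ s(y.1, z.1) := by
        intro h
        rcases Sym2.eq_iff.mp h with ⟨h1, -⟩ | ⟨h1, -⟩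
        · exact hne h1
        · exact hzx h1.symm
      exact hc haxy hayz hedne ⟨y.1, by simp, by simp⟩ (by rw [← hy2, hy2'])

theorem nabla_of_snarkless_is_egc {V : Type*} [Fintype V]
    (G : SimpleGraph V) [DecidableRel G.Adj] (hcubic : G.IsRegularOfDegree 3)
    (c : Sym2 V → Fin 3) (hc : IsProperEdgeColoring G c) :
    ∃ c' : Sym2 (V × Fin 3) → Fin 3,
      IsProperEdgeColoring (nabla G (fun u v => c s(u, v))) c' ∧
      ∀ x y z : V × Fin 3,
        (nabla G (fun u v => c s(u, v))).Adj x y →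
        (nabla G (fun u v => c s(u, v))).Adj y z →
        (nabla G (fun u v => c s(u, v))).Adj x z →
        ∀ i : Fin 3, c' s(x, y) = i ∨ c' s(y, z) = i ∨ c' s(x, z) = i := by
  classical
  refine ⟨Sym2.lift ⟨fun x y => -(x.2 + y.2), fun x y => by ring_nf; rw [add_comm]⟩, ?_, ?_⟩
  · -- properness: key case with shared vertex first
    have key : ∀ a b q : V × Fin 3,
        (nabla G (fun u v => c s(u, v))).Adj a b →
        (nabla G (fun u v => c s(u, v))).Adj a q →
        s(a, b) ≠ s(a, q) → b.2 ≠ q.2 := by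
      intro a b q hab haq hne hbq
      have hb : b ≠ q := by
        intro h; exact hne (by rw [h])
      by_cases h1 : a.1 = b.1
      · by_cases h2 : a.1 = q.1
        · exact hb (Prod.ext (h1.symm.trans h2) hbq)
        · obtain ⟨-, ha2, hq2⟩ := nabla_cross G c haq h2
          exact (nabla_same G c hab h1) ((ha2.trans hq2.symm).trans hbq.symm)
      · by_cases h2 : a.1 = q.1
        · obtain ⟨-, ha2, hb2⟩ := nabla_cross G c hab h1
          exact (nabla_same G c haq h2) (ha2.trans (hb2.symm.trans hbq))
        · obtain ⟨hG1, ha2, hb2⟩ := nabla_cross G c hab h1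
          obtain ⟨hG2, ha2', hq2⟩ := nabla_cross G c haq h2
          by_cases h3 : b.1 = q.1
          · exact hb (Prod.ext h3 hbq)
          · have hedne : s(a.1, b.1) ≠ s(a.1, q.1) := by
              intro h
              rcases Sym2.eq_iff.mp h with ⟨-, hh⟩ | ⟨hh, -⟩
              · exact h3 hh
              · exact h2 hh
            exact hc hG1 hG2 hedne ⟨a.1, by simp, by simp⟩ (by rw [← ha2, ha2'])
    intro e₁ e₂ h1 h2 hne hshare
    induction' e₁ using Sym2.ind with a b
    induction' e₂ using Sym2.ind with p q
    rw [SimpleGraph.mem_edgeSet] at h1 h2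
    obtain ⟨v, hv1, hv2⟩ := hshare
    rw [Sym2.mem_iff] at hv1 hv2
    simp only [Sym2.lift_mk, ne_eq, neg_inj]
    rcases hv1 with rfl | rfl <;> rcases hv2 with h | h
    · subst h
      intro hcol
      exact key v b q h1 h2 hne (add_left_cancel hcol)
    · subst h
      intro hcol
      have hne' : s(v, b) ≠ s(v, p) := by
        rw [show s(v, p) = s(p, v) from Sym2.eq_swap]; exact hne
      exact key v b p h1 h2.symm hne' (add_left_cancel (hcol.trans (add_comm p.2 v.2)))
    · subst h
      intro hcol
      have hne' : s(v, a) ≠ s(v, q) := by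
        rw [show s(v, a) = s(a, v) from Sym2.eq_swap]; exact hne
      exact key v a q h1.symm h2 hne' (add_right_cancel (hcol.trans (add_comm v.2 q.2)))
    · subst h
      intro hcol
      have hne' : s(v, a) ≠ s(v, p) := by
        rw [show s(v, a) = s(a, v) from Sym2.eq_swap,
            show s(v, p) = s(p, v) from Sym2.eq_swap]; exact hne
      exact key v a p h1.symm h2.symm hne' (add_right_cancel hcol)
  · intro x y z hxy hyz hxz i
    have h1 : x.1 = y.1 := nabla_tri_base G c hc hxy hyz hxz
    have h2 : y.1 = z.1 := nabla_tri_base G c hc hyz hxz.symm hxy.symm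
    have d1 : x.2 ≠ y.2 := nabla_same G c hxy h1
    have d2 : y.2 ≠ z.2 := nabla_same G c hyz h2
    have d3 : x.2 ≠ z.2 := nabla_same G c hxz (h1.trans h2)
    simp only [Sym2.lift_mk]
    have key3 : ∀ a b e i : Fin 3, a ≠ b → b ≠ e → a ≠ e →
        (-(a + b) = i ∨ -(b + e) = i ∨ -(a + e) = i) := by decide
    exact key3 x.2 y.2 z.2 i d1 d2 d3
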